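/- Let k be an algebraically closed field of characteristic 0 and let f_1,...,f_m ∈ k[t_1,...,t_n] be algebraically independent over k. Then every polynomial g determined by (f_1,...,f_m) lies in k(f_1,...,f_m) ∩ k[t_1,...,t_n], i.e., k⟨f_1,...,f_m⟩ ⊆ k(f_1,...,f_m). -/

import Mathlib

open MvPolynomial
open scoped TensorProduct
set_option synthInstance.maxHeartbeats 1000000
set_option maxHeartbeats 4000000

/-- `p` vanishes at every point of `A`. -/
def VanishesOn {k : Type*} [CommSemiring k] {m : ℕ} (A : Set (Fin m → k))
    (p : MvPolynomial (Fin m) k) : Prop :=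
  ∀ a ∈ A, eval a p = 0

/-- The Zariski closure of `A ⊆ k^m` has dimension at most `d` (with `dim ∅ = -1`):
for every index set `S` with more than `d` elements, the vanishing ideal of `A`
contains a nonzero polynomial supported on the variables in `S`. -/
def ZClosureDimLE {k : Type*} [CommSemiring k] {m : ℕ} (A : Set (Fin m → k)) (d : ℤ) : Prop :=
  ∀ S : Finset (Fin m), d < (S.card : ℤ) →
    ∃ p : MvPolynomial (Fin m) k, p ≠ 0 ∧
      p ∈ MvPolynomial.supported k (↑S : Set (Fin m)) ∧ VanishesOn A p

/-- The range of the polynomial map `k^n → k^m` induced by `f`. -/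
def polyRange {k : Type*} [CommSemiring k] {m n : ℕ}
    (f : Fin m → MvPolynomial (Fin n) k) : Set (Fin m → k) :=
  Set.range fun a : Fin n → k => fun i => eval a (f i)

/-- `f` is almost surjective on `k`: the Zariski closure of the complement of the range
of the induced map `k^n → k^m` has dimension at most `m - 2`. -/
def AlmostSurj {k : Type*} [CommSemiring k] {m n : ℕ}
    (f : Fin m → MvPolynomial (Fin n) k) : Prop :=
  ZClosureDimLE (polyRange f)ᶜ ((m : ℤ) - 2)

/-- `g` is determined by `f`. -/
def Determined {k : Type*} [CommSemiring k] {m n : ℕ}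
    (f : Fin m → MvPolynomial (Fin n) k) (g : MvPolynomial (Fin n) k) : Prop :=
  ∀ a b : Fin n → k, (∀ i, eval a (f i) = eval b (f i)) → eval a g = eval b g

lemma aux_pullback {K L B : Type*} [Field K] [Field L] [CommRing B] [Algebra K L]
    [Algebra K B] (j : B →ₐ[K] L) (hj : Function.Injective j) (y : L ⊗[K] B) (N : ℕ)
    (h : (Algebra.TensorProduct.map (AlgHom.id K L) j) y ^ N = 0) : y ^ N = 0 := by
  have hco : ⇑(Algebra.TensorProduct.map (AlgHom.id K L) j) =
      ⇑(LinearMap.lTensor L j.toLinearMap) := by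
    funext z
    induction z using TensorProduct.induction_on with
    | zero => simp
    | tmul a b => simp
    | add a b ha hb => simp [map_add, ha, hb]
  have hinj : Function.Injective (Algebra.TensorProduct.map (AlgHom.id K L) j) := by
    rw [hco]
    exact Module.Flat.lTensor_preserves_injective_linearMap j.toLinearMap hj
  apply hinj
  rw [map_pow, h, map_zero]

theorem stmt11 {k : Type*} [Field k] [IsAlgClosed k] [CharZero k] {m n : ℕ}
    (f : Fin m → MvPolynomial (Fin n) k) (hind : AlgebraicIndependent k f)
    (g : MvPolynomial (Fin n) k) (hg : Determined f g) :
    ∃ r s : MvPolynomial (Fin m) k, aeval f s ≠ 0 ∧ g * aeval f s = aeval f r := by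

  classical
  let L := FractionRing (MvPolynomial (Fin n) k)
  let ι : MvPolynomial (Fin n) k →ₐ[k] L := IsScalarTower.toAlgHom k _ L
  have hιinj : Function.Injective ι := IsFractionRing.injective (MvPolynomial (Fin n) k) L
  let K : IntermediateField k L := IntermediateField.adjoin k (Set.range fun i => ι (f i))
  haveI : CharZero K := charZero_of_injective_algebraMap (algebraMap k K).injective
  set d : Fin m → MvPolynomial (Fin n ⊕ Fin n) k :=
    fun i => rename Sum.inl (f i) - rename Sum.inr (f i) with hd
  set I : Ideal (MvPolynomial (Fin n ⊕ Fin n) k) := Ideal.span (Set.range d) with hI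
  set gd : MvPolynomial (Fin n ⊕ Fin n) k := rename Sum.inl g - rename Sum.inr g with hgd
  have hrad : gd ∈ I.radical := by
    rw [← MvPolynomial.vanishingIdeal_zeroLocus_eq_radical (K := k)]
    intro x hx
    have hfi : ∀ i, eval (x ∘ Sum.inl) (f i) = eval (x ∘ Sum.inr) (f i) := by
      intro i
      have h0 := hx (d i) (Ideal.subset_span ⟨i, rfl⟩)
      rw [hd] at h0
      simpa [map_sub, eval_rename, sub_eq_zero] using h0
    have := hg _ _ hfi
    simp [hgd, map_sub, eval_rename, this, sub_eq_zero]
  obtain ⟨N, hN⟩ := hrad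
  have hN1 : gd ^ (N + 1) ∈ I := by rw [pow_succ]; exact I.mul_mem_right gd hN
  let T := L ⊗[K] L
  let ψ₁ : MvPolynomial (Fin n) k →ₐ[k] T :=
    (Algebra.TensorProduct.includeLeft (R := K) (S := k) (A := L) (B := L)).comp ι
  let ψ₂ : MvPolynomial (Fin n) k →ₐ[k] T :=
    ((Algebra.TensorProduct.includeRight (R := K) (A := L) (B := L)).restrictScalars k).comp ι
  let φ : MvPolynomial (Fin n ⊕ Fin n) k →ₐ[k] T :=
    aeval (Sum.elim (fun i => ψ₁ (X i)) (fun i => ψ₂ (X i)))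
  have φ_inl : ∀ p : MvPolynomial (Fin n) k, φ (rename Sum.inl p) = (ι p) ⊗ₜ[K] 1 := by
    intro p
    show aeval _ (rename Sum.inl p) = _
    rw [aeval_rename, Sum.elim_comp_inl, ← comp_aeval_apply, aeval_X_left_apply]
    rfl
  have φ_inr : ∀ p : MvPolynomial (Fin n) k, φ (rename Sum.inr p) = 1 ⊗ₜ[K] (ι p) := by
    intro p
    show aeval _ (rename Sum.inr p) = _
    rw [aeval_rename, Sum.elim_comp_inr, ← comp_aeval_apply, aeval_X_left_apply]
    rfl
  have hK1 : ∀ y : L, y ∈ K → (y ⊗ₜ[K] (1 : L) : T) = 1 ⊗ₜ[K] y := by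
    intro y hy
    obtain ⟨c, rfl⟩ : ∃ c : K, algebraMap K L c = y := ⟨⟨y, hy⟩, rfl⟩
    rw [Algebra.algebraMap_eq_smul_one, TensorProduct.smul_tmul]
  have hgen : ∀ i, φ (d i) = 0 := by
    intro i
    rw [hd]
    simp only [map_sub, φ_inl, φ_inr]
    rw [hK1 _ (IntermediateField.subset_adjoin k _ ⟨i, rfl⟩), sub_self]
  have hIker : I ≤ RingHom.ker (φ : MvPolynomial (Fin n ⊕ Fin n) k →+* T) := by
    rw [hI, Ideal.span_le]
    rintro q ⟨i, rfl⟩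
    exact hgen i
  set x : T := (ι g) ⊗ₜ[K] 1 - 1 ⊗ₜ[K] (ι g) with hx
  have hφgd : φ gd = x := by rw [hgd]; rw [map_sub, φ_inl, φ_inr]
  have hxN : x ^ (N + 1) = 0 := by
    rw [← hφgd, ← map_pow]
    exact hIker hN1
  have hmemK : ι g ∈ K := by
    by_cases hint : IsIntegral K (ι g)
    · -- algebraic case
      set P : Polynomial K := minpoly K (ι g) with hP
      haveI : Fact (Irreducible P) := ⟨minpoly.irreducible hint⟩
      let j : AdjoinRoot P →ₐ[K] L := AdjoinRoot.liftAlgHom P (Algebra.ofId K L) (ι g) (minpoly.aeval K (ι g))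
      have hj : Function.Injective j := (j : AdjoinRoot P →+* L).injective
      set y : L ⊗[K] AdjoinRoot P := (ι g) ⊗ₜ[K] 1 - 1 ⊗ₜ[K] (AdjoinRoot.root P) with hy
      have hyN : y ^ (N + 1) = 0 := by
        apply aux_pullback _ hj
        have hmapy : (Algebra.TensorProduct.map (AlgHom.id K L) j) y = x := by
          simp [hy, hx, j, AdjoinRoot.liftAlgHom_root]; exact congrArg _ (AdjoinRoot.liftAlgHom_root _ _ _ _)
        rw [hmapy, hxN]
      set Pm : Polynomial L := P.map (algebraMap K L) with hPm
      let Q := Polynomial L ⧸ Ideal.span {Pm}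
      let χ₁ : L →ₐ[K] Q :=
        (Ideal.Quotient.mkₐ K (Ideal.span {Pm})).comp (IsScalarTower.toAlgHom K L (Polynomial L))
      have haevX : Polynomial.aeval (Polynomial.X : Polynomial L) P = Pm := by
        rw [hPm, ← Polynomial.aeval_map_algebraMap L, Polynomial.aeval_X_left_apply]
      have hPzero : Polynomial.aeval
          ((Ideal.Quotient.mkₐ K (Ideal.span {Pm})) (Polynomial.X : Polynomial L)) P = 0 := by
        rw [Polynomial.aeval_algHom_apply, haevX]
        exact Ideal.Quotient.eq_zero_iff_mem.mpr (Ideal.mem_span_singleton_self Pm)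
      let χ₂ : AdjoinRoot P →ₐ[K] Q :=
        AdjoinRoot.liftAlgHom P (Algebra.ofId K Q) ((Ideal.Quotient.mkₐ K (Ideal.span {Pm})) Polynomial.X) (by exact hPzero)
      let χ : L ⊗[K] AdjoinRoot P →ₐ[K] Q := by exact Algebra.TensorProduct.productMap (S := Q) χ₁ χ₂
      have hχy : χ y = (Ideal.Quotient.mkₐ K (Ideal.span {Pm}))
          (Polynomial.C (ι g) - Polynomial.X) := by
        have e1 : χ ((ι g) ⊗ₜ[K] (1 : AdjoinRoot P)) = χ₁ (ι g) := by
          show χ₁ (ι g) * χ₂ 1 = χ₁ (ι g); rw [map_one]; exact mul_one (χ₁ (ι g))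
        have e2 : χ ((1 : L) ⊗ₜ[K] AdjoinRoot.root P) = χ₂ (AdjoinRoot.root P) := by
          show χ₁ 1 * χ₂ (AdjoinRoot.root P) = χ₂ (AdjoinRoot.root P); rw [map_one]; exact one_mul (χ₂ (AdjoinRoot.root P))
        have e3 : χ₂ (AdjoinRoot.root P) =
            (Ideal.Quotient.mkₐ K (Ideal.span {Pm})) Polynomial.X :=
          AdjoinRoot.liftAlgHom_root P _ _ _
        have e4 : χ₁ (ι g) = (Ideal.Quotient.mkₐ K (Ideal.span {Pm})) (Polynomial.C (ι g)) := rfl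
        rw [hy, map_sub, e1, e2, e3, e4, map_sub]
      have hmemspan : (Polynomial.C (ι g) - Polynomial.X) ^ (N + 1) ∈ Ideal.span {Pm} := by
        rw [← Ideal.Quotient.eq_zero_iff_mem]
        have : χ (y ^ (N + 1)) = 0 := by rw [hyN, map_zero]
        rw [map_pow, hχy] at this
        simpa using this
      have hdvd : Pm ∣ (Polynomial.C (ι g) - Polynomial.X) ^ (N + 1) :=
        Ideal.mem_span_singleton.mp hmemspan
      have hdvd' : Pm ∣ (Polynomial.X - Polynomial.C (ι g)) ^ (N + 1) := by
        have hrw : (Polynomial.C (ι g) - Polynomial.X) ^ (N + 1) =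
            (-1 : Polynomial L) ^ (N + 1) * (Polynomial.X - Polynomial.C (ι g)) ^ (N + 1) := by
          rw [← mul_pow]; ring_nf
        rw [hrw] at hdvd
        exact (((isUnit_one (M := Polynomial L)).neg.pow (N + 1)).dvd_mul_left).mp hdvd
      obtain ⟨i, hile, hassoc⟩ :=
        (dvd_prime_pow (Polynomial.prime_X_sub_C (ι g)) (N + 1)).mp hdvd'
      have hsq : Squarefree Pm :=
        (@Polynomial.Separable.map K _ L (inferInstanceAs (CommSemiring (FractionRing (MvPolynomial (Fin n) k)))) P (minpoly.irreducible hint).separable (algebraMap K L)).squarefree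
      have hdeg1 : P.degree = 1 := by
        match i, hassoc with
        | 0, hassoc =>
          exfalso
          rw [pow_zero] at hassoc
          have hu : IsUnit Pm := hassoc.symm.isUnit isUnit_one -- Associated Pm 1
          have : P ≠ 0 := minpoly.ne_zero hint
          have hdegP : 0 < P.natDegree := minpoly.natDegree_pos hint
          have : Pm.natDegree = 0 := Polynomial.natDegree_eq_zero_of_isUnit hu
          rw [hPm, Polynomial.natDegree_map] at this
          omega
        | 1, hassoc =>
          rw [pow_one] at hassoc
          have : Pm.degree = 1 := by
            rw [Polynomial.degree_eq_degree_of_associated hassoc, Polynomial.degree_X_sub_C]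
          rwa [hPm, Polynomial.degree_map] at this
        | (i+2), hassoc =>
          exfalso
          have hd2 : (Polynomial.X - Polynomial.C (ι g)) * (Polynomial.X - Polynomial.C (ι g))
              ∣ Pm := by
            refine dvd_trans ?_ hassoc.symm.dvd
            rw [← pow_two]
            exact pow_dvd_pow _ (by omega)
          exact Polynomial.not_isUnit_X_sub_C (ι g) (hsq _ hd2)
      have := (minpoly.degree_eq_one_iff).mp hdeg1
      obtain ⟨c, hc⟩ := this
      rw [← hc]
      exact c.2
    · exfalso
      have htr : Transcendental K (ι g) := fun h => hint h.isIntegral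
      have hj : Function.Injective (Polynomial.aeval (R := K) (ι g)) :=
        transcendental_iff_injective.mp htr
      set y : L ⊗[K] Polynomial K :=
        (ι g) ⊗ₜ[K] 1 - 1 ⊗ₜ[K] Polynomial.X with hy
      have hyN : y ^ (N + 1) = 0 := by
        apply aux_pullback _ hj
        have hmapy :
            (Algebra.TensorProduct.map (AlgHom.id K L) (Polynomial.aeval (ι g))) y = x := by
          simp [hy, hx]
        rw [hmapy, hxN]
      have h0 : (Polynomial.C (ι g) - Polynomial.X) ^ (N + 1) = (0 : Polynomial L) := by
        have hsy : (polyEquivTensor K L).symm y = Polynomial.C (ι g) - Polynomial.X := by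
          rw [hy, map_sub]
          rw [polyEquivTensor_symm_apply_tmul, polyEquivTensor_symm_apply_tmul]
          rw [← Polynomial.C_1 (R := K)]
          rw [Polynomial.sum_C_index (by simp)]
          · simp [Polynomial.sum_X_index, Polynomial.monomial_one_one_eq_X]
        rw [← hsy, ← map_pow, hyN, map_zero]
      have := pow_eq_zero_iff (Nat.succ_ne_zero N) |>.mp h0
      rw [sub_eq_zero] at this
      exact Polynomial.X_ne_C (ι g) this.symm
  rw [IntermediateField.mem_adjoin_range_iff] at hmemK
  obtain ⟨r, s, hrs⟩ := hmemK
  have haev : ∀ q : MvPolynomial (Fin m) k, aeval (fun i => ι (f i)) q = ι (aeval f q) := by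
    intro q
    rw [comp_aeval_apply]
  rw [haev, haev] at hrs
  by_cases hs : aeval f s = 0
  · refine ⟨0, 1, by simp, ?_⟩
    have h1 : ι g = 0 := by rw [hrs, hs, map_zero, div_zero]
    have hg0 : g = 0 := hιinj (by rw [h1, map_zero])
    simp [hg0]
  · refine ⟨r, s, hs, hιinj ?_⟩
    have hs' : ι (aeval f s) ≠ 0 := fun h0 => hs (hιinj (by rw [h0, map_zero]))
    rw [map_mul, hrs, div_mul_cancel₀ _ hs']
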